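/- arXiv:1311.0851 — 2 statements merged into one kernel-verified Lean document; each statement's English description precedes it below -/
import Mathlib

section
/- Let ℓ > 1, c, s ≥ 0 with c² + s² = 1, s > 0, A = diag(ℓ, 1), and for η ≥ 1 let B(η) = [[1+(η−1)c², (η−1)cs], [(η−1)cs, 1+(η−1)s²]]. Then the function η ↦ ‖A⁻¹ − B(η)⁻¹‖_F² over η ≥ 1 is uniquely minimized at η* = ℓ/(c² + ℓs²). -/
theorem frobenius_precision_loss_optimal_shrinker (ℓ c s : ℝ) (hℓ : 1 < ℓ)
    (hc : 0 ≤ c) (hs : 0 < s) (h : c^2 + s^2 = 1) :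
    let A : Matrix (Fin 2) (Fin 2) ℝ := !![ℓ, 0; 0, 1]
    let B : ℝ → Matrix (Fin 2) (Fin 2) ℝ := fun η =>
      !![1 + (η - 1) * c^2, (η - 1) * c * s; (η - 1) * c * s, 1 + (η - 1) * s^2]
    let F : ℝ → ℝ := fun η => ∑ i : Fin 2, ∑ j : Fin 2, ((A⁻¹ - (B η)⁻¹) i j)^2
    (∀ η : ℝ, 1 ≤ η → F (ℓ / (c^2 + ℓ * s^2)) ≤ F η) ∧
    (∀ η : ℝ, 1 ≤ η → F η = F (ℓ / (c^2 + ℓ * s^2)) → η = ℓ / (c^2 + ℓ * s^2)) := by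
  intro A B F
  have hℓ0 : (0:ℝ) < ℓ := by linarith
  have hs2 : s^2 = 1 - c^2 := by linarith
  have hs4 : s^4 = (1 - c^2)^2 := by rw [← hs2]; ring
  have hs3 : s^3 = s * (1 - c^2) := by rw [← hs2]; ring
  set d : ℝ := c^2 + ℓ * s^2 with hd_def
  have hd : (1:ℝ) ≤ d := by nlinarith [sq_nonneg s]
  have hd0 : (0:ℝ) < d := by linarith
  have hAinv : A⁻¹ = !![1/ℓ, 0; 0, 1] := by
    apply Matrix.inv_eq_right_inv
    show (!![ℓ, 0; 0, 1] : Matrix (Fin 2) (Fin 2) ℝ) * _ = 1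
    ext i j
    fin_cases i <;> fin_cases j <;>
      simp [Matrix.mul_apply, Fin.sum_univ_two] <;> field_simp
  have hBinv : ∀ η : ℝ, 1 ≤ η →
      (B η)⁻¹ = !![1 + (1/η - 1) * c^2, (1/η - 1) * c * s;
                   (1/η - 1) * c * s, 1 + (1/η - 1) * s^2] := by
    intro η hη
    have hη0 : η ≠ 0 := by positivity
    apply Matrix.inv_eq_right_inv
    show (!![1 + (η - 1) * c^2, (η - 1) * c * s; (η - 1) * c * s, 1 + (η - 1) * s^2] :
        Matrix (Fin 2) (Fin 2) ℝ) * _ = 1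
    rw [Matrix.mul_fin_two, Matrix.one_fin_two]
    have h1 : (1 + (η - 1) * c^2) * (1 + (1/η - 1) * c^2) +
        (η - 1) * c * s * ((1/η - 1) * c * s) = 1 := by
      field_simp; ring_nf; rw [hs2]; ring
    have h2 : (1 + (η - 1) * c^2) * ((1/η - 1) * c * s) +
        (η - 1) * c * s * (1 + (1/η - 1) * s^2) = 0 := by
      field_simp; ring_nf; rw [hs3]; ring
    have h3 : (η - 1) * c * s * (1 + (1/η - 1) * c^2) +
        (1 + (η - 1) * s^2) * ((1/η - 1) * c * s) = 0 := by
      field_simp; ring_nf; rw [hs3]; ring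
    have h4 : (η - 1) * c * s * ((1/η - 1) * c * s) +
        (1 + (η - 1) * s^2) * (1 + (1/η - 1) * s^2) = 1 := by
      field_simp; ring_nf; rw [hs4, hs2]; ring
    rw [h1, h2, h3, h4]
  have key : ∀ η : ℝ, 1 ≤ η →
      F η = (d/ℓ - 1/η)^2 + (1 - 1/ℓ)^2 * (1 - c^4) := by
    intro η hη
    have hη0 : η ≠ 0 := by positivity
    show (∑ i : Fin 2, ∑ j : Fin 2, ((A⁻¹ - (B η)⁻¹) i j)^2) = _
    rw [hAinv, hBinv η hη, hd_def]
    simp [Fin.sum_univ_two, Matrix.sub_apply]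
    field_simp
    ring_nf
    rw [hs4, hs2]
    ring
  have hstar : 1 ≤ ℓ / d := by
    rw [le_div_iff₀ hd0]
    nlinarith [sq_nonneg c]
  have hFstar : F (ℓ / d) = (1 - 1/ℓ)^2 * (1 - c^4) := by
    rw [key _ hstar, one_div_div, sub_self]
    ring
  constructor
  · intro η hη
    rw [hFstar, key η hη]
    nlinarith [sq_nonneg (d/ℓ - 1/η)]
  · intro η hη heq
    rw [hFstar, key η hη] at heq
    have h0 : (d/ℓ - 1/η)^2 = 0 := by linarith
    have h1 : d/ℓ = 1/η := by
      have := pow_eq_zero_iff (n := 2) (by norm_num) |>.mp h0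
      linarith
    have hη0 : (0:ℝ) < η := by linarith
    field_simp at h1
    rw [eq_div_iff hd0.ne']
    linarith [h1]
end

section
/- Let ℓ > 1, c, s ≥ 0 with c² + s² = 1, s > 0, A = diag(ℓ,1), and B(η) = [[1+(η−1)c², (η−1)cs], [(η−1)cs, 1+(η−1)s²]]. Then the operator norm ‖A − B(η)‖_op, as a function of η ≥ 1, is minimized at η = ℓ. Specifically, the eigenvalues λ±(η) of A − B(η) satisfy: λ₊(η) ≥ 0 ≥ λ₋(η) for all η ≥ 1; λ₊(η) ≥ −λ₋(η) for η ≤ ℓ and λ₊(η) ≤ −λ₋(η) for η ≥ ℓ; λ₊ is decreasing in η on [1,ℓ] and −λ₋ is increasing on [ℓ,∞). -/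
private lemma aux_sqrt_le {x a : ℝ} (ha : 0 ≤ a) (hx : x ≤ a ^ 2) :
    Real.sqrt x ≤ a := by
  calc Real.sqrt x ≤ Real.sqrt (a ^ 2) := Real.sqrt_le_sqrt hx
    _ = a := Real.sqrt_sq ha

theorem operator_loss_optimal_shrinker (ℓ c s : ℝ) (hℓ : 1 < ℓ)
    (hc : 0 ≤ c) (hs : 0 < s) (h : c^2 + s^2 = 1) :
    let t : ℝ → ℝ := fun η => (ℓ - 1) - (η - 1)
    let d : ℝ → ℝ := fun η => -(ℓ - 1) * (η - 1) * s^2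
    let lamPlus : ℝ → ℝ := fun η => (t η + Real.sqrt ((t η)^2 - 4 * d η)) / 2
    let lamMinus : ℝ → ℝ := fun η => (t η - Real.sqrt ((t η)^2 - 4 * d η)) / 2
    (∀ η : ℝ, 1 ≤ η → 0 ≤ lamPlus η ∧ lamMinus η ≤ 0) ∧
    (∀ η : ℝ, 1 ≤ η → η ≤ ℓ → -lamMinus η ≤ lamPlus η) ∧
    (∀ η : ℝ, ℓ ≤ η → lamPlus η ≤ -lamMinus η) ∧
    AntitoneOn lamPlus (Set.Icc 1 ℓ) ∧
    MonotoneOn (fun η => -lamMinus η) (Set.Ici ℓ) ∧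
    (∀ η : ℝ, 1 ≤ η →
      max (lamPlus ℓ) (-lamMinus ℓ) ≤ max (lamPlus η) (-lamMinus η)) := by
  intro t d lamPlus lamMinus
  have hs2 : s ^ 2 ≤ 1 := by nlinarith [sq_nonneg c]
  have hs2' : 0 < s ^ 2 := by positivity
  -- discriminant
  have hDval : ∀ η : ℝ, (t η) ^ 2 - 4 * d η
      = (ℓ - η) ^ 2 + 4 * (ℓ - 1) * (η - 1) * s ^ 2 := by
    intro η; simp only [t, d]; ring
  have hDnn : ∀ η : ℝ, 1 ≤ η → 0 ≤ (t η) ^ 2 - 4 * d η := by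
    intro η hη
    rw [hDval]
    have h1 : 0 ≤ (ℓ - η) ^ 2 := sq_nonneg _
    have h2 : 0 ≤ 4 * (ℓ - 1) * (η - 1) * s ^ 2 :=
      mul_nonneg (mul_nonneg (by linarith) (by linarith)) (sq_nonneg s)
    linarith
  have hrsq : ∀ η : ℝ, 1 ≤ η →
      (Real.sqrt ((t η) ^ 2 - 4 * d η)) ^ 2
        = (ℓ - η) ^ 2 + 4 * (ℓ - 1) * (η - 1) * s ^ 2 := by
    intro η hη
    rw [Real.sq_sqrt (hDnn η hη), hDval]
  have htval : ∀ η : ℝ, t η = ℓ - η := by intro η; simp only [t]; ring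
  -- Part 1
  have part1 : ∀ η : ℝ, 1 ≤ η → 0 ≤ lamPlus η ∧ lamMinus η ≤ 0 := by
    intro η hη
    have hr0 : 0 ≤ Real.sqrt ((t η) ^ 2 - 4 * d η) := Real.sqrt_nonneg _
    have hr2 := hrsq η hη
    have ht := htval η
    constructor
    · show 0 ≤ (t η + Real.sqrt ((t η)^2 - 4 * d η)) / 2
      nlinarith [sq_nonneg (Real.sqrt ((t η)^2 - 4 * d η) + t η),
        sq_nonneg (Real.sqrt ((t η)^2 - 4 * d η) - t η),
        mul_nonneg (mul_nonneg (by linarith : (0:ℝ) ≤ ℓ - 1) (by linarith : (0:ℝ) ≤ η - 1)) hs2'.le]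
    · show (t η - Real.sqrt ((t η)^2 - 4 * d η)) / 2 ≤ 0
      nlinarith [sq_nonneg (Real.sqrt ((t η)^2 - 4 * d η) + t η),
        sq_nonneg (Real.sqrt ((t η)^2 - 4 * d η) - t η),
        mul_nonneg (mul_nonneg (by linarith : (0:ℝ) ≤ ℓ - 1) (by linarith : (0:ℝ) ≤ η - 1)) hs2'.le]
  -- Part 2
  have part2 : ∀ η : ℝ, 1 ≤ η → η ≤ ℓ → -lamMinus η ≤ lamPlus η := by
    intro η hη hηℓ
    show -((t η - Real.sqrt ((t η)^2 - 4 * d η)) / 2)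
        ≤ (t η + Real.sqrt ((t η)^2 - 4 * d η)) / 2
    have ht := htval η
    linarith
  -- Part 3
  have part3 : ∀ η : ℝ, ℓ ≤ η → lamPlus η ≤ -lamMinus η := by
    intro η hη
    show (t η + Real.sqrt ((t η)^2 - 4 * d η)) / 2
        ≤ -((t η - Real.sqrt ((t η)^2 - 4 * d η)) / 2)
    have ht := htval η
    linarith
  -- Part 4
  have part4 : AntitoneOn lamPlus (Set.Icc 1 ℓ) := by
    intro a ha b hb hab
    obtain ⟨ha1, haℓ⟩ := ha
    obtain ⟨hb1, hbℓ⟩ := hb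
    show (t b + Real.sqrt ((t b)^2 - 4 * d b)) / 2
        ≤ (t a + Real.sqrt ((t a)^2 - 4 * d a)) / 2
    set ra := Real.sqrt ((t a)^2 - 4 * d a) with hradef
    have hra0 : 0 ≤ ra := Real.sqrt_nonneg _
    have hra2 := hrsq a ha1
    have hta := htval a
    have htb := htval b
    -- key inequality
    have hkey : 2 * (ℓ - 1) * s ^ 2 - (ℓ - a) ≤ ra := by
      rcases le_or_gt (2 * (ℓ - 1) * s ^ 2 - (ℓ - a)) 0 with h' | h'
      · linarith
      · nlinarith [hra2, hra0, mul_nonneg (mul_nonneg (by linarith : (0:ℝ) ≤ ℓ - 1)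
          (by linarith : (0:ℝ) ≤ ℓ - 1)) (mul_nonneg hs2'.le (by linarith : (0:ℝ) ≤ 1 - s ^ 2))]
    have hδ : 0 ≤ b - a := by linarith
    have hstep : Real.sqrt ((t b)^2 - 4 * d b) ≤ ra + (b - a) := by
      apply aux_sqrt_le (by linarith)
      rw [hDval]
      nlinarith [mul_nonneg hδ (by linarith : 0 ≤ ra - (2 * (ℓ - 1) * s ^ 2 - (ℓ - a)))]
    linarith
  -- Part 5
  have part5 : MonotoneOn (fun η => -lamMinus η) (Set.Ici ℓ) := by
    intro a ha b hb hab
    simp only [Set.mem_Ici] at ha hb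
    show -((t a - Real.sqrt ((t a)^2 - 4 * d a)) / 2)
        ≤ -((t b - Real.sqrt ((t b)^2 - 4 * d b)) / 2)
    set rb := Real.sqrt ((t b)^2 - 4 * d b) with hrbdef
    have hrb0 : 0 ≤ rb := Real.sqrt_nonneg _
    have hrb2 := hrsq b (by linarith)
    have hta := htval a
    have htb := htval b
    have hδ : 0 ≤ b - a := by linarith
    have hstep : Real.sqrt ((t a)^2 - 4 * d a) ≤ rb + (b - a) := by
      apply aux_sqrt_le (by linarith)
      rw [hDval]
      nlinarith [mul_nonneg hδ (by nlinarith : 0 ≤ rb - ((ℓ - b) - 2 * (ℓ - 1) * s ^ 2))]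
    linarith
  refine ⟨part1, part2, part3, part4, part5, ?_⟩
  -- Part 6
  intro η hη
  have htℓ : t ℓ = 0 := by simp only [t]; ring
  have heq : -lamMinus ℓ = lamPlus ℓ := by
    show -((t ℓ - Real.sqrt ((t ℓ)^2 - 4 * d ℓ)) / 2)
        = (t ℓ + Real.sqrt ((t ℓ)^2 - 4 * d ℓ)) / 2
    rw [htℓ]; ring
  rw [heq, max_self]
  rcases le_or_gt η ℓ with hηℓ | hℓη
  · have := part4 ⟨hη, hηℓ⟩ ⟨le_refl 1 |>.trans hℓ.le, le_refl ℓ⟩ hηℓ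
    exact le_trans this (le_max_left _ _)
  · have := part5 (Set.mem_Ici.mpr (le_refl ℓ)) (Set.mem_Ici.mpr hℓη.le) hℓη.le
    have this' : -lamMinus ℓ ≤ -lamMinus η := this
    rw [heq] at this'
    exact le_trans this' (le_max_right _ _)
end
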